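/- Let (W,S) be an even Coxeter system, t ∈ S, U = {s ∈ S : m_{st} < ∞}, and let c be the color map c(w) = (g_{UT}(w)W_{T∖{t}})_{T spherical, t∈T}. If w, w' ∈ W_U satisfy c(w) = c(w') and V := S(w⁻¹w') is spherical, then t ∉ V; i.e., if two vertices of a common Coxeter cell of spherical type V have the same color, then w⁻¹w' ∈ W_{V∖{t}}. -/

import Mathlib

open CoxeterSystem List
open scoped Pointwise

/-- A Coxeter matrix is *even* if every off-diagonal entry is even
(the entry `0`, denoting `∞`, counts as even, i.e. is also allowed). -/
def CoxeterMatrix.IsEven {B : Type*} (M : CoxeterMatrix B) : Prop :=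
  ∀ i i' : B, i ≠ i' → Even (M i i')

/-- The standard parabolic subgroup `W_T` generated by the simple reflections in `T`. -/
def CoxeterSystem.parabolic {B W : Type*} [Group W] {M : CoxeterMatrix B}
    (cs : CoxeterSystem M W) (T : Set B) : Subgroup W :=
  Subgroup.closure (cs.simple '' T)

/-- A subset `T` of generators is *spherical* if the parabolic subgroup `W_T` is finite. -/
def CoxeterSystem.IsSpherical {B W : Type*} [Group W] {M : CoxeterMatrix B}
    (cs : CoxeterSystem M W) (T : Set B) : Prop :=
  (cs.parabolic T : Set W).Finite

/-- The support of `w`: the set of generators occurring in a reduced expression for `w`. -/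
def CoxeterSystem.support {B W : Type*} [Group W] {M : CoxeterMatrix B}
    (cs : CoxeterSystem M W) (w : W) : Set B :=
  {i | ∃ ω : List B, cs.IsReduced ω ∧ cs.wordProd ω = w ∧ i ∈ ω}

section Aux

variable {B W : Type*} [Group W] {M : CoxeterMatrix B} (cs : CoxeterSystem M W)

private lemma aux_liftable (heven : M.IsEven) (T : Set B) [DecidablePred (· ∈ T)] :
    M.IsLiftable (fun i => if i ∈ T then cs.simple i else 1) := by
  intro i i'
  have hev : i ≠ i' → (cs.simple i') ^ M i i' = 1 ∧ (cs.simple i) ^ M i i' = 1 := by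
    intro hne
    obtain ⟨k, hk⟩ := heven i i' hne
    constructor <;>
      rw [hk, ← two_mul, pow_mul, simple_sq, one_pow]
  by_cases h1 : i ∈ T <;> by_cases h2 : i' ∈ T <;> simp only [h1, h2, if_pos, if_neg,
    if_true, if_false, mul_one, one_mul, one_pow]
  · exact cs.simple_mul_simple_pow i i'
  · exact (hev (fun h => h2 (h ▸ h1))).2
  · exact (hev (fun h => h1 (h ▸ h2))).1

end Aux

theorem stmt_19 {B W : Type*} [Group W] {M : CoxeterMatrix B} (cs : CoxeterSystem M W)
    (heven : M.IsEven) (t : B) (w w' : W)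
    (hw : w ∈ cs.parabolic {s : B | M s t ≠ 0})
    (hw' : w' ∈ cs.parabolic {s : B | M s t ≠ 0})
    (hc : ∀ T : Set B, cs.IsSpherical T → t ∈ T →
      ∀ g : W →* W, (∀ i ∈ T, g (cs.simple i) = cs.simple i) →
        (∀ i ∉ T, g (cs.simple i) = 1) →
        g w • (cs.parabolic (T \ {t}) : Set W) =
          g w' • (cs.parabolic (T \ {t}) : Set W))
    (hsph : cs.IsSpherical (cs.support (w⁻¹ * w'))) :
    t ∉ cs.support (w⁻¹ * w') ∧
      w⁻¹ * w' ∈ cs.parabolic (cs.support (w⁻¹ * w') \ {t}) := by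
  classical
  set v := w⁻¹ * w' with hv
  set V := cs.support v with hV
  obtain ⟨ω₀, hω₀len, hω₀⟩ := cs.exists_reduced_word v
  have hω₀red : cs.IsReduced ω₀ := by
    show cs.length (cs.wordProd ω₀) = ω₀.length
    exact hω₀len
  have hmem : ∀ i ∈ ω₀, i ∈ V := fun i hi => ⟨ω₀, hω₀red, hω₀.symm, hi⟩
  -- v ∈ parabolic V
  have hvV : v ∈ cs.parabolic V := by
    rw [hω₀]
    clear hω₀ hω₀len hω₀red
    induction ω₀ with
    | nil => simp [Subgroup.one_mem]
    | cons i l ih =>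
        rw [cs.wordProd_cons]
        exact mul_mem (Subgroup.subset_closure ⟨i, hmem i List.mem_cons_self, rfl⟩)
          (ih fun j hj => hmem j (List.mem_cons_of_mem _ hj))
  -- claim: t ∉ V
  have htV : t ∉ V := by
    intro ht
    -- build g fixing V, killing complement
    set g : W →* W := cs.lift ⟨fun i => if i ∈ V then cs.simple i else 1,
      aux_liftable cs heven V⟩ with hg
    have hg1 : ∀ i ∈ V, g (cs.simple i) = cs.simple i := fun i hi => by
      rw [hg, lift_apply_simple, if_pos hi]
    have hg2 : ∀ i ∉ V, g (cs.simple i) = 1 := fun i hi => by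
      rw [hg, lift_apply_simple, if_neg hi]
    have hcos := hc V hsph ht g hg1 hg2
    -- g v ∈ parabolic (V \ {t})
    have hgv : g v ∈ cs.parabolic (V \ {t}) := by
      have h1 : g w' ∈ g w' • (cs.parabolic (V \ {t}) : Set W) :=
        ⟨1, Subgroup.one_mem _, mul_one _⟩
      rw [← hcos] at h1
      obtain ⟨p, hp, hpe⟩ := h1
      have : g v = p := by
        rw [hv, map_mul, map_inv, ← hpe]
        simp [smul_eq_mul, inv_mul_cancel_left]
      exact this ▸ hp
    -- g v = v since all letters of ω₀ in V
    have hgvv : g v = v := by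
      rw [hω₀]
      unfold CoxeterSystem.wordProd
      rw [map_list_prod, List.map_map]
      congr 1
      apply List.map_congr_left
      intro i hi
      exact hg1 i (hmem i hi)
    rw [hgvv] at hgv
    -- build h killing t, fixing others
    set h : W →* W := cs.lift ⟨fun i => if i ∈ ({t}ᶜ : Set B) then cs.simple i else 1,
      aux_liftable cs heven {t}ᶜ⟩ with hh
    have hh1 : ∀ i : B, i ≠ t → h (cs.simple i) = cs.simple i := fun i hi => by
      rw [hh, lift_apply_simple]
      simp [hi]
    have hh2 : h (cs.simple t) = 1 := by
      rw [hh, lift_apply_simple, if_neg (by simp)]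
    -- h fixes parabolic (V \ {t})
    have hfix : h v = v := by
      refine Subgroup.closure_induction ?_ (map_one h) ?_ ?_ hgv
      · rintro x ⟨i, hi, rfl⟩
        exact hh1 i hi.2
      · intro x y _ _ hx hy; rw [map_mul, hx, hy]
      · intro x _ hx; rw [map_inv, hx]
    -- but t ∈ support v: reduced word containing t
    obtain ⟨ω, hred, hprod, htω⟩ := ht
    -- h v = wordProd of filtered word
    have hfil : h v = cs.wordProd (ω.filter (· ≠ t)) := by
      rw [← hprod]
      clear hprod hred htω
      induction ω with
      | nil => simp
      | cons i l ih =>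
          rw [cs.wordProd_cons, map_mul, ih]
          by_cases hit : i = t
          · subst hit
            rw [hh2, one_mul, List.filter_cons_of_neg (by simp)]
          · rw [hh1 i hit, List.filter_cons_of_pos (by simpa using hit), cs.wordProd_cons]
    have hlt : (ω.filter (· ≠ t)).length < ω.length := by
      apply List.length_filter_lt_length_iff_exists .. |>.mpr
      exact ⟨t, htω, by simp⟩
    have : cs.length v < ω.length := by
      calc cs.length v = cs.length (cs.wordProd (ω.filter (· ≠ t))) := by rw [← hfil, hfix]
        _ ≤ (ω.filter (· ≠ t)).length := cs.length_wordProd_le _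
        _ < ω.length := hlt
    rw [← hprod] at this
    have hred' : cs.length (cs.wordProd ω) = ω.length := hred
    omega
  refine ⟨htV, ?_⟩
  rwa [Set.diff_singleton_eq_self htV]
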